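/- Let G be a graph and let (C, P) be a lollipop in G such that no lollipop in G is better than (C, P). Let u be the endpoint of P not on C. Then the neighborhood of u in G is contained in V(C) ∪ V(P). -/

import Mathlib

open SimpleGraph

/-- `P'` is aligned with `P` (both starting at `x`): shared vertices appear in the
same relative order. -/
def Aligned {V : Type*} [DecidableEq V] {G : SimpleGraph V} {x a b : V}
    (P : G.Walk x a) (P' : G.Walk x b) : Prop :=
  ∀ u v : V, u ∈ P.support → v ∈ P.support → u ∈ P'.support → v ∈ P'.support →
    P.support.idxOf u < P.support.idxOf v →
    P'.support.idxOf u < P'.support.idxOf v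

/-- Two paths with common origin `x` are internally disjoint: every common vertex is a
common endpoint. -/
def IntDisjoint {V : Type*} {G : SimpleGraph V} {x a b : V}
    (P : G.Walk x a) (Q : G.Walk x b) : Prop :=
  ∀ v : V, v ∈ P.support → v ∈ Q.support → (v = x ∨ v = a) ∧ (v = x ∨ v = b)

/-- 2-connected: at least 3 vertices, connected, and no cut vertex. -/
def TwoConnected {V : Type*} [Fintype V] (G : SimpleGraph V) : Prop :=
  3 ≤ Fintype.card V ∧ G.Connected ∧
    ∀ v : V, ((⊤ : G.Subgraph).deleteVerts {v}).coe.Connected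

/-- A lollipop: a cycle `C` and a path `P` whose vertex sets meet exactly in the
vertex `a`, an endpoint of `P` lying on `C`. -/
def IsLollipop {V : Type*} {G : SimpleGraph V} {v a w : V}
    (C : G.Walk v v) (P : G.Walk a w) : Prop :=
  C.IsCycle ∧ P.IsPath ∧ a ∈ C.support ∧ ∀ u ∈ C.support, u ∈ P.support → u = a

/-- For a best lollipop `(C, P)`, the endpoint `w` of `P` not on `C` has all of its
neighbors in `V(C) ∪ V(P)`. -/
theorem stmt_7 {V : Type*} {G : SimpleGraph V} {v w : V}
    (C : G.Walk v v) (P : G.Walk v w) (hL : IsLollipop C P) (hw : w ≠ v)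
    (hbest : ∀ (v' a' w' : V) (C' : G.Walk v' v') (P' : G.Walk a' w'),
      IsLollipop C' P' →
      ¬ (C.length < C'.length ∨ (C'.length = C.length ∧ P.length < P'.length))) :
    ∀ b : V, G.Adj w b → b ∈ C.support ∨ b ∈ P.support := by
  intro b hadj
  by_contra hb
  push_neg at hb
  obtain ⟨hbC, hbP⟩ := hb
  obtain ⟨hC, hP, hvC, hint⟩ := hL
  set P' : G.Walk v b := P.concat hadj with hP'
  have hsupp : P'.support = P.support.concat b := by
    rw [List.concat_eq_append]; exact Walk.support_concat _ _
  have hP'path : P'.IsPath := by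
    rw [Walk.isPath_def, hsupp, List.concat_eq_append, List.nodup_append']
    exact ⟨hP.support_nodup, List.nodup_singleton b,
      by simp only [List.disjoint_singleton]; exact fun h => hbP h⟩
  have hmem : ∀ x, x ∈ P'.support ↔ x ∈ P.support ∨ x = b := by
    intro x; rw [hsupp, List.concat_eq_append]; simp
  have : IsLollipop C P' := by
    refine ⟨hC, hP'path, hvC, fun u huC huP' => ?_⟩
    rcases (hmem u).1 huP' with h | h
    · exact hint u huC h
    · exact absurd (h ▸ huC) hbC
  exact hbest v v b C P' this (Or.inr ⟨rfl, by
    rw [hP', Walk.length_concat]; omega⟩)
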